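/- Let π : 2^ℕ × 2^ℕ → 2^ℕ be the projection onto the first coordinate. The set 𝒞 = {C ∈ K(2^ℕ × 2^ℕ) : π(C) = 2^ℕ} of compact subsets of the square of Cantor space projecting onto the whole Cantor space is a closed subset of the hyperspace K(2^ℕ × 2^ℕ) with the Vietoris topology; moreover 𝒞 is nonempty and has no isolated points, hence is homeomorphic to the Cantor set. -/

import Mathlib

open TopologicalSpace

abbrev Cantor : Type := ℕ → Bool

noncomputable instance : MetricSpace Cantor :=
  TopologicalSpace.metrizableSpaceMetric Cantor

/-- The family of compact subsets of `2^ℕ × 2^ℕ` projecting onto the whole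
Cantor space. -/
def Cc : Set (NonemptyCompacts (Cantor × Cantor)) :=
  {C | Prod.fst '' (C : Set (Cantor × Cantor)) = Set.univ}

open Set Filter Topology PiNat CantorScheme ENNReal

noncomputable section Brouwer

variable {Z : Type} [MetricSpace Z] [CompactSpace Z] [TotallyDisconnectedSpace Z]

/-- the vanishing sequence of bounds -/
def uu (n : ℕ) : ℝ≥0∞ := (2 : ℝ≥0∞)⁻¹ ^ n

lemma uu_anti : Antitone uu := fun m n h =>
  pow_le_pow_of_le_one zero_le (by norm_num) h

lemma uu_lt {ε : ℝ≥0∞} (hε : 0 < ε) : ∃ m, uu m < ε :=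
  ENNReal.exists_inv_two_pow_lt hε.ne'

lemma uu_pos (n : ℕ) : 0 < uu n := ENNReal.pow_pos (ENNReal.inv_pos.2 (by norm_num)) n

/-- binary partition trees of clopen sets -/
structure IsTree (d : ℕ) (p : List Bool → Set Z) : Prop where
  split : ∀ w : List Bool, w.length < d → p (w ++ [false]) ∪ p (w ++ [true]) = p w
  disj : ∀ w : List Bool, w.length < d → Disjoint (p (w ++ [false])) (p (w ++ [true]))
  clopen : ∀ w : List Bool, w.length ≤ d → IsClopen (p w)
  nonemp : ∀ w : List Bool, w.length ≤ d → (p w).Nonempty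

lemma IsTree.subset {d : ℕ} {p : List Bool → Set Z} (ht : IsTree d p)
    (w : List Bool) (a : Bool) (hw : w.length < d) : p (w ++ [a]) ⊆ p w := by
  cases a
  · exact (subset_union_left).trans (ht.split w hw).le
  · exact (subset_union_right).trans (ht.split w hw).le

lemma IsTree.subset_root {d : ℕ} {p : List Bool → Set Z} (ht : IsTree d p) :
    ∀ w : List Bool, w.length ≤ d → p w ⊆ p [] := by
  intro w
  induction w using List.reverseRecOn with
  | nil => intro _; exact subset_rfl
  | append_singleton w a ih =>
      intro hw
      rw [List.length_append, List.length_singleton] at hw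
      exact (ht.subset w a (by omega)).trans (ih (by omega))

/-- combining two trees into one of one greater depth -/
def comb (K : Set Z) (pA pB : List Bool → Set Z) : List Bool → Set Z
  | [] => K
  | (false :: w) => pA w
  | (true :: w) => pB w

lemma isTree_comb {d : ℕ} {K : Set Z} {pA pB : List Bool → Set Z}
    (hA : IsTree d pA) (hB : IsTree d pB) (hK : IsClopen K)
    (hU : pA [] ∪ pB [] = K) (hD : Disjoint (pA []) (pB [])) :
    IsTree (d + 1) (comb K pA pB) := by
  constructor
  · rintro (_ | ⟨a, w⟩) hw
    · simpa [comb] using hU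
    · simp only [List.length_cons, Nat.add_lt_add_iff_right] at hw
      cases a
      · simpa [comb, List.cons_append] using hA.split w hw
      · simpa [comb, List.cons_append] using hB.split w hw
  · rintro (_ | ⟨a, w⟩) hw
    · simpa [comb] using hD
    · simp only [List.length_cons, Nat.add_lt_add_iff_right] at hw
      cases a
      · simpa [comb, List.cons_append] using hA.disj w hw
      · simpa [comb, List.cons_append] using hB.disj w hw
  · rintro (_ | ⟨a, w⟩) hw
    · exact hK
    · simp only [List.length_cons, Nat.add_le_add_iff_right] at hw
      cases a
      · exact hA.clopen w hw
      · exact hB.clopen w hw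
  · rintro (_ | ⟨a, w⟩) hw
    · obtain ⟨z, hz⟩ := hA.nonemp [] (by simp)
      exact ⟨z, hU ▸ (Or.inl hz : z ∈ pA [] ∪ pB [])⟩
    · simp only [List.length_cons, Nat.add_le_add_iff_right] at hw
      cases a
      · exact hA.nonemp w hw
      · exact hB.nonemp w hw

lemma comb_apply_cons (K : Set Z) (pA pB : List Bool → Set Z) (a : Bool) (w : List Bool) :
    comb K pA pB (a :: w) = cond a (pB w) (pA w) := by cases a <;> rfl

variable (hacc : ∀ z : Z, AccPt z (Filter.principal (Set.univ : Set Z)))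

include hacc in
lemma exists_two_points {K : Set Z} (hK : IsOpen K) (hne : K.Nonempty) :
    ∃ a ∈ K, ∃ b ∈ K, a ≠ b := by
  obtain ⟨a, ha⟩ := hne
  obtain ⟨b, ⟨hbK, -⟩, hba⟩ := accPt_iff_nhds.mp (hacc a) K (hK.mem_nhds ha)
  exact ⟨a, ha, b, hbK, fun h => hba (h.symm)⟩

include hacc

lemma exists_clopen_split
    {K : Set Z} (hK : IsClopen K) (hne : K.Nonempty) :
    ∃ A B : Set Z, IsClopen A ∧ IsClopen B ∧ A.Nonempty ∧ B.Nonempty ∧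
      Disjoint A B ∧ A ∪ B = K := by
  obtain ⟨a, ha, b, hb, hab⟩ := exists_two_points hacc hK.2 hne
  have : TotallySeparatedSpace Z := loc_compact_t2_tot_disc_iff_tot_sep.mp inferInstance
  obtain ⟨U, hU, haU, hbU⟩ := exists_isClopen_of_totally_separated hab
  refine ⟨K ∩ U, K \ U, hK.inter hU, hK.diff hU, ⟨a, ha, haU⟩, ⟨b, hb, hbU⟩, ?_, ?_⟩
  · exact Disjoint.mono_left inter_subset_right disjoint_sdiff_self_right
  · rw [inter_union_diff]

lemma exists_tree (d : ℕ) : ∀ K : Set Z, IsClopen K → K.Nonempty →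
    ∃ p : List Bool → Set Z, IsTree d p ∧ p [] = K := by
  induction d with
  | zero =>
      intro K hK hne
      exact ⟨fun _ => K, ⟨fun w hw => by omega, fun w hw => by omega,
        fun w _ => hK, fun w _ => hne⟩, rfl⟩
  | succ d ih =>
      intro K hK hne
      obtain ⟨A, B, hA, hB, hAne, hBne, hD, hU⟩ := exists_clopen_split hacc hK hne
      obtain ⟨pA, htA, hArt⟩ := ih A hA hAne
      obtain ⟨pB, htB, hBrt⟩ := ih B hB hBne
      exact ⟨comb K pA pB, isTree_comb htA htB hK (by rw [hArt, hBrt, hU])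
        (by rw [hArt, hBrt]; exact hD), rfl⟩

lemma exists_tree_small {K : Set Z} (hK : IsClopen K) (hne : K.Nonempty)
    {ε : ℝ≥0∞} (hε : 0 < ε) :
    ∃ (d : ℕ) (p : List Bool → Set Z), 1 ≤ d ∧ IsTree d p ∧ p [] = K ∧
      ∀ w : List Bool, w.length = d → EMetric.diam (p w) ≤ ε := by
  have hhalf : 0 < ε / 2 := ENNReal.half_pos hε.ne'
  have hchoice : ∀ x : Z, ∃ V : Set Z, IsClopen V ∧ x ∈ V ∧ V ⊆ EMetric.ball x (ε / 2) :=
    fun x => compact_exists_isClopen_in_isOpen EMetric.isOpen_ball (EMetric.mem_ball_self hhalf)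
  choose V hVclopen hVmem hVsub using hchoice
  have hVdiam : ∀ x, EMetric.diam (V x) ≤ ε := fun x => by
    refine (EMetric.diam_mono (hVsub x)).trans ?_
    calc EMetric.diam (EMetric.ball x (ε / 2)) ≤ 2 * (ε / 2) := EMetric.diam_ball
    _ = ε := ENNReal.mul_div_cancel' (by norm_num) (by norm_num)
  have claim : ∀ t : Finset Z, ∀ K : Set Z, IsClopen K → K.Nonempty →
      K ⊆ ⋃ x ∈ t, V x →
      ∃ (d : ℕ) (p : List Bool → Set Z), 1 ≤ d ∧ IsTree d p ∧ p [] = K ∧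
        ∀ w : List Bool, w.length = d → EMetric.diam (p w) ≤ ε := by
    intro t
    classical
    induction t using Finset.induction with
    | empty =>
        intro K hK hne hcov
        obtain ⟨z, hz⟩ := hne
        simpa using hcov hz
    | @insert a s hnotmem ih =>
        intro K hK hne hcov
        by_cases hB : (K \ V a).Nonempty
        · have hBclopen : IsClopen (K \ V a) := hK.diff (hVclopen a)
          have hBcov : K \ V a ⊆ ⋃ x ∈ s, V x := by
            rintro y ⟨hyK, hyV⟩
            have := hcov hyK
            simp only [Finset.mem_insert, mem_iUnion, exists_prop] at this ⊢
            obtain ⟨x, (rfl | hx), hy⟩ := this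
            · exact absurd hy hyV
            · exact ⟨x, hx, hy⟩
          obtain ⟨d, pB, hd, htB, hBrt, hsmallB⟩ := ih (K \ V a) hBclopen hB hBcov
          by_cases hA : (K ∩ V a).Nonempty
          · obtain ⟨pA, htA, hArt⟩ :=
              exists_tree hacc d (K ∩ V a) (hK.inter (hVclopen a)) hA
            refine ⟨d + 1, comb K pA pB, by omega,
              isTree_comb htA htB hK (by rw [hArt, hBrt, inter_union_diff])
                (by rw [hArt, hBrt];
                    exact Disjoint.mono_left inter_subset_right disjoint_sdiff_self_right),
              rfl, ?_⟩
            rintro (_ | ⟨b, w⟩) hw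
            · simp at hw
            · simp only [List.length_cons, Nat.add_right_cancel_iff] at hw
              cases b
              · calc EMetric.diam (comb K pA pB (false :: w)) =
                    EMetric.diam (pA w) := rfl
                  _ ≤ EMetric.diam (V a) := by
                      refine EMetric.diam_mono ?_
                      refine ((htA.subset_root w (by omega)).trans ?_)
                      rw [hArt]; exact inter_subset_right
                  _ ≤ ε := hVdiam a
              · exact hsmallB w hw
          · have hKB : K = K \ V a := by
              rw [not_nonempty_iff_eq_empty] at hA
              rw [eq_comm, sdiff_eq_self_iff_disjoint, Set.disjoint_iff_inter_eq_empty]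
              rwa [inter_comm]
            exact ⟨d, pB, hd, htB, by rw [hKB]; exact hBrt, hsmallB⟩
        · -- K ⊆ V a, so diam K ≤ ε
          have hKsub : K ⊆ V a := by
            rw [not_nonempty_iff_eq_empty, diff_eq_empty] at hB
            exact hB
          obtain ⟨p, htp, hprt⟩ := exists_tree hacc 1 K hK hne
          refine ⟨1, p, le_refl 1, htp, hprt, fun w hw => ?_⟩
          calc EMetric.diam (p w) ≤ EMetric.diam (p []) :=
                EMetric.diam_mono (htp.subset_root w hw.le)
            _ ≤ EMetric.diam (V a) := by rw [hprt]; exact EMetric.diam_mono hKsub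
            _ ≤ ε := hVdiam a
  obtain ⟨t, ht⟩ := IsCompact.elim_finite_subcover (hK.1.isCompact)
    V (fun x => (hVclopen x).2) (fun z _ => mem_iUnion.2 ⟨z, hVmem z⟩)
  exact claim t K hK hne ht

end Brouwer

/-- state of the refinement machine -/
structure MSt (Z : Type) where
  n : ℕ
  d : ℕ
  p : List Bool → Set Z
  v : List Bool

noncomputable section Brouwer2

variable {Z : Type} [MetricSpace Z] [CompactSpace Z] [TotallyDisconnectedSpace Z]
  (hacc : ∀ z : Z, AccPt z (Filter.principal (Set.univ : Set Z)))

/-- the goodness invariant -/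
def GoodSt (s : MSt Z) : Prop :=
  1 ≤ s.d ∧ s.v.length ≤ s.d ∧ IsTree s.d s.p ∧
  (∀ w : List Bool, w.length = s.d → EMetric.diam (s.p w) ≤ uu s.n) ∧
  (s.n = 0 ∨ EMetric.diam (s.p []) ≤ uu (s.n - 1))

open Classical in
noncomputable def newStage (K : Set Z) (m : ℕ) : MSt Z :=
  if h : IsClopen K ∧ K.Nonempty then
    ⟨m, (exists_tree_small hacc h.1 h.2 (uu_pos m)).choose,
      (exists_tree_small hacc h.1 h.2 (uu_pos m)).choose_spec.choose, []⟩
  else ⟨m, 1, fun _ => K, []⟩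

lemma newStage_spec {K : Set Z} (h1 : IsClopen K) (h2 : K.Nonempty) (m : ℕ) :
    (newStage hacc K m).n = m ∧ (newStage hacc K m).v = [] ∧
    1 ≤ (newStage hacc K m).d ∧
    IsTree (newStage hacc K m).d (newStage hacc K m).p ∧
    (newStage hacc K m).p [] = K ∧
    ∀ w : List Bool, w.length = (newStage hacc K m).d →
      EMetric.diam ((newStage hacc K m).p w) ≤ uu m := by
  have h : IsClopen K ∧ K.Nonempty := ⟨h1, h2⟩
  have spec := (exists_tree_small hacc h.1 h.2 (uu_pos m)).choose_spec.choose_spec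
  have he : newStage hacc K m = ⟨m, (exists_tree_small hacc h.1 h.2 (uu_pos m)).choose,
      (exists_tree_small hacc h.1 h.2 (uu_pos m)).choose_spec.choose, []⟩ := dif_pos h
  rw [he]
  exact ⟨rfl, rfl, spec.1, spec.2.1, spec.2.2.1, spec.2.2.2⟩

noncomputable def stepM (s : MSt Z) (a : Bool) : MSt Z :=
  if s.v.length < s.d then ⟨s.n, s.d, s.p, s.v ++ [a]⟩
  else { newStage hacc (s.p s.v) (s.n + 1) with v := [a] }

lemma stepM_good {s : MSt Z} (hs : GoodSt s) (a : Bool) :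
    GoodSt (stepM hacc s a) ∧
    (stepM hacc s a).p (stepM hacc s a).v ⊆ s.p s.v ∧
    (s.v.length < s.d →
      (stepM hacc s a).n = s.n ∧ (stepM hacc s a).d = s.d ∧
      (stepM hacc s a).v = s.v ++ [a]) ∧
    (¬ s.v.length < s.d → (stepM hacc s a).n = s.n + 1) := by
  obtain ⟨hd1, hvd, htree, hsmall, hroot⟩ := hs
  by_cases h : s.v.length < s.d
  · have he : stepM hacc s a = ⟨s.n, s.d, s.p, s.v ++ [a]⟩ := if_pos h
    rw [he]
    refine ⟨⟨hd1, ?_, htree, hsmall, hroot⟩, htree.subset s.v a h, fun _ => ⟨rfl, rfl, rfl⟩,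
      fun hc => absurd h hc⟩
    simp only [List.length_append, List.length_singleton]
    omega
  · have hlen : s.v.length = s.d := le_antisymm hvd (not_lt.1 h)
    have hcl : IsClopen (s.p s.v) := htree.clopen s.v hvd
    have hne : (s.p s.v).Nonempty := htree.nonemp s.v hvd
    have hdm : EMetric.diam (s.p s.v) ≤ uu s.n := hsmall s.v hlen
    obtain ⟨hn', hv', hd', htree', hroot', hsmall'⟩ := newStage_spec hacc hcl hne (s.n + 1)
    have he : stepM hacc s a = { newStage hacc (s.p s.v) (s.n + 1) with v := [a] } := if_neg h
    rw [he]
    refine ⟨⟨hd', by simpa using hd', htree', ?_, Or.inr ?_⟩, ?_, fun hc => absurd hc h,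
      fun _ => hn'⟩
    · intro w hw
      exact (hsmall' w hw).trans_eq (congrArg uu hn'.symm)
    · show EMetric.diam ((newStage hacc (s.p s.v) (s.n + 1)).p []) ≤
        uu ((newStage hacc (s.p s.v) (s.n + 1)).n - 1)
      rw [hroot', hn', Nat.add_sub_cancel]
      exact hdm
    · show (newStage hacc (s.p s.v) (s.n + 1)).p [a] ⊆ s.p s.v
      have h3 : (newStage hacc (s.p s.v) (s.n + 1)).p ([] ++ [a]) ⊆
          (newStage hacc (s.p s.v) (s.n + 1)).p [] := htree'.subset [] a (by simp; omega)
      simpa [hroot'] using h3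

lemma stepM_cover {s : MSt Z} (hs : GoodSt s) :
    ((stepM hacc s false).p (stepM hacc s false).v ∪
      (stepM hacc s true).p (stepM hacc s true).v = s.p s.v) ∧
    Disjoint ((stepM hacc s false).p (stepM hacc s false).v)
      ((stepM hacc s true).p (stepM hacc s true).v) := by
  obtain ⟨hd1, hvd, htree, hsmall, hroot⟩ := hs
  by_cases h : s.v.length < s.d
  · simp only [stepM, if_pos h]
    exact ⟨htree.split s.v h, htree.disj s.v h⟩
  · have hcl : IsClopen (s.p s.v) := htree.clopen s.v hvd
    have hne : (s.p s.v).Nonempty := htree.nonemp s.v hvd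
    obtain ⟨hn', hv', hd', htree', hroot', hsmall'⟩ := newStage_spec hacc hcl hne (s.n + 1)
    have he : stepM hacc s false = { newStage hacc (s.p s.v) (s.n + 1) with v := [false] } :=
      if_neg h
    have he2 : stepM hacc s true = { newStage hacc (s.p s.v) (s.n + 1) with v := [true] } :=
      if_neg h
    rw [he, he2]
    constructor
    · have := htree'.split [] (by simp; omega)
      simpa [hroot'] using this
    · have := htree'.disj [] (by simp; omega)
      simpa using this

variable [Nonempty Z]

noncomputable def mach : List Bool → MSt Z
  | [] => newStage hacc Set.univ 0
  | (a :: l) => stepM hacc (mach l) a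

noncomputable def AA (l : List Bool) : Set Z := (mach hacc l).p (mach hacc l).v

lemma good_mach : ∀ l : List Bool, GoodSt (mach hacc l) := by
  intro l
  induction l with
  | nil =>
      obtain ⟨hn', hv', hd', htree', hroot', hsmall'⟩ :=
        newStage_spec hacc isClopen_univ univ_nonempty 0
      show GoodSt (newStage hacc Set.univ 0)
      refine ⟨hd', by simp [hv'], htree', ?_, Or.inl hn'⟩
      rw [hn']
      exact hsmall'
  | cons a l ih => exact (stepM_good hacc ih a).1

lemma AA_nil : AA hacc ([] : List Bool) = (Set.univ : Set Z) := by
  obtain ⟨hn', hv', hd', htree', hroot', hsmall'⟩ :=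
    newStage_spec hacc isClopen_univ univ_nonempty 0
  show (newStage hacc Set.univ 0).p (newStage hacc Set.univ 0).v = _
  rw [hv', hroot']

lemma AA_sub (l : List Bool) (a : Bool) : AA hacc (a :: l) ⊆ AA hacc l :=
  (stepM_good hacc (good_mach hacc l) a).2.1

lemma AA_cover (l : List Bool) :
    AA hacc (false :: l) ∪ AA hacc (true :: l) = AA hacc l :=
  (stepM_cover hacc (good_mach hacc l)).1

lemma AA_disj (l : List Bool) :
    Disjoint (AA hacc (false :: l)) (AA hacc (true :: l)) :=
  (stepM_cover hacc (good_mach hacc l)).2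

lemma AA_clopen (l : List Bool) : IsClopen (AA hacc l) := by
  obtain ⟨hd1, hvd, htree, -, -⟩ := good_mach hacc l
  exact htree.clopen _ hvd

lemma AA_nonempty (l : List Bool) : (AA hacc l).Nonempty := by
  obtain ⟨hd1, hvd, htree, -, -⟩ := good_mach hacc l
  exact htree.nonemp _ hvd

lemma AA_diam (l : List Bool) (hn : 1 ≤ (mach hacc l).n) :
    EMetric.diam (AA hacc l) ≤ uu ((mach hacc l).n - 1) := by
  obtain ⟨hd1, hvd, htree, hsmall, hroot⟩ := good_mach hacc l
  rcases hroot with h0 | hd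
  · omega
  · exact le_trans (EMetric.diam_mono (htree.subset_root _ hvd)) hd


lemma mach_res_succ (x : ℕ → Bool) (k : ℕ) :
    mach hacc (PiNat.res x (k + 1)) = stepM hacc (mach hacc (PiNat.res x k)) (x k) := rfl

lemma stage_grow (x : ℕ → Bool) : ∀ g k : ℕ,
    (mach hacc (PiNat.res x k)).d - (mach hacc (PiNat.res x k)).v.length ≤ g →
    ∃ k', k < k' ∧ (mach hacc (PiNat.res x k)).n < (mach hacc (PiNat.res x k')).n := by
  intro g
  induction g with
  | zero =>
      intro k hg
      have hgood := good_mach hacc (PiNat.res x k)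
      have hnlt : ¬ (mach hacc (PiNat.res x k)).v.length < (mach hacc (PiNat.res x k)).d := by
        omega
      refine ⟨k + 1, Nat.lt_succ_self k, ?_⟩
      rw [mach_res_succ]
      rw [(stepM_good hacc hgood (x k)).2.2.2 hnlt]
      omega
  | succ g ih =>
      intro k hg
      have hgood := good_mach hacc (PiNat.res x k)
      by_cases h : (mach hacc (PiNat.res x k)).v.length < (mach hacc (PiNat.res x k)).d
      · obtain ⟨hn, hd, hv⟩ := (stepM_good hacc hgood (x k)).2.2.1 h
        have hg' : (mach hacc (PiNat.res x (k + 1))).d -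
            (mach hacc (PiNat.res x (k + 1))).v.length ≤ g := by
          rw [mach_res_succ, hd, hv]
          simp only [List.length_append, List.length_singleton]
          omega
        obtain ⟨k', hk', hlt⟩ := ih (k + 1) hg'
        refine ⟨k', by omega, ?_⟩
        rw [mach_res_succ, hn] at hlt
        exact hlt
      · refine ⟨k + 1, Nat.lt_succ_self k, ?_⟩
        rw [mach_res_succ, (stepM_good hacc hgood (x k)).2.2.2 h]
        omega

lemma stage_unbounded (x : ℕ → Bool) (m : ℕ) :
    ∃ k, m ≤ (mach hacc (PiNat.res x k)).n := by
  induction m with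
  | zero => exact ⟨0, Nat.zero_le _⟩
  | succ m ih =>
      obtain ⟨k, hk⟩ := ih
      obtain ⟨k', _, hlt⟩ := stage_grow hacc x
        ((mach hacc (PiNat.res x k)).d - (mach hacc (PiNat.res x k)).v.length) k le_rfl
      exact ⟨k', by omega⟩

lemma AA_antitone_res (x : ℕ → Bool) : ∀ i j : ℕ, i ≤ j →
    AA hacc (PiNat.res x j) ⊆ AA hacc (PiNat.res x i) := by
  intro i j hij
  induction j with
  | zero => rw [Nat.le_zero] at hij; rw [hij]
  | succ j ih =>
      rcases Nat.lt_or_ge i (j + 1) with h | h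
      · exact le_trans (AA_sub hacc (PiNat.res x j) (x j)) (ih (by omega))
      · have : i = j + 1 := by omega
        rw [this]

lemma AA_vanishing : CantorScheme.VanishingDiam (AA hacc (Z := Z)) := by
  intro x
  rw [ENNReal.tendsto_atTop_zero]
  intro ε hε
  obtain ⟨m, hm⟩ := uu_lt hε
  obtain ⟨k, hk⟩ := stage_unbounded hacc x (m + 1)
  refine ⟨k, fun j hj => ?_⟩
  have h1 : EMetric.diam (AA hacc (PiNat.res x j)) ≤ EMetric.diam (AA hacc (PiNat.res x k)) :=
    EMetric.diam_mono (AA_antitone_res hacc x k j hj)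
  have h2 := AA_diam hacc (PiNat.res x k) (by omega)
  have h3 : uu ((mach hacc (PiNat.res x k)).n - 1) ≤ uu m := uu_anti (by omega)
  exact h1.trans (h2.trans (h3.trans hm.le))

include hacc in
/-- Brouwer's theorem: a nonempty compact metrizable totally disconnected perfect space
is homeomorphic to the Cantor space. -/
theorem brouwer_homeo : Nonempty ((ℕ → Bool) ≃ₜ Z) := by
  have hanti : CantorScheme.Antitone (AA hacc (Z := Z)) := fun l a => AA_sub hacc l a
  have hclosed : ∀ l, IsClosed (AA hacc (Z := Z) l) := fun l => (AA_clopen hacc l).1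
  have hca : CantorScheme.ClosureAntitone (AA hacc (Z := Z)) :=
    hanti.closureAntitone hclosed
  have hdiam := AA_vanishing hacc (Z := Z)
  have hne : ∀ l, (AA hacc (Z := Z) l).Nonempty := AA_nonempty hacc
  have hdom : (CantorScheme.inducedMap (AA hacc (Z := Z))).1 = Set.univ :=
    hca.map_of_vanishingDiam hdiam hne
  set F : (ℕ → Bool) → Z := fun x =>
    (CantorScheme.inducedMap (AA hacc (Z := Z))).2 ⟨x, by rw [hdom]; exact Set.mem_univ x⟩
    with hF
  have hcont : Continuous F := by
    apply hdiam.map_continuous.comp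
    exact Continuous.subtype_mk continuous_id _
  have hdisj : CantorScheme.Disjoint (AA hacc (Z := Z)) := by
    intro l a b hab
    cases a <;> cases b
    · exact absurd rfl hab
    · exact AA_disj hacc l
    · exact (AA_disj hacc l).symm
    · exact absurd rfl hab
  have hinj : Function.Injective F := by
    intro x y hxy
    have := hdisj.map_injective (a₁ := ⟨x, by rw [hdom]; exact Set.mem_univ x⟩)
      (a₂ := ⟨y, by rw [hdom]; exact Set.mem_univ y⟩) hxy
    exact congrArg Subtype.val this
  have hsurj : Function.Surjective F := by
    intro z
    classical
    -- build the branch through z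
    let L : ℕ → List Bool := fun n =>
      Nat.rec [] (fun _ ln => (if z ∈ AA hacc (false :: ln) then false else true) :: ln) n
    let x : ℕ → Bool := fun n => if z ∈ AA hacc (false :: L n) then false else true
    have hres : ∀ n, PiNat.res x n = L n := by
      intro n
      induction n with
      | zero => rfl
      | succ n ih => rw [PiNat.res_succ, ih]
    have hzmem : ∀ n, z ∈ AA hacc (L n) := by
      intro n
      induction n with
      | zero => rw [show L 0 = [] from rfl, AA_nil]; exact Set.mem_univ z
      | succ n ih =>
          have hLs : L (n + 1) =
              (if z ∈ AA hacc (false :: L n) then false else true) :: L n := rfl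
          by_cases hz : z ∈ AA hacc (false :: L n)
          · rw [hLs, if_pos hz]; exact hz
          · have hmem : z ∈ AA hacc (false :: L n) ∪ AA hacc (true :: L n) := by
              rw [AA_cover hacc (L n)]; exact ih
            have hz2 : z ∈ AA hacc (true :: L n) := hmem.resolve_left hz
            rw [hLs, if_neg hz]; exact hz2
    refine ⟨x, ?_⟩
    have hFx : ∀ n, F x ∈ AA hacc (PiNat.res x n) := fun n =>
      CantorScheme.map_mem ⟨x, by rw [hdom]; exact Set.mem_univ x⟩ n
    have hzx : ∀ n, z ∈ AA hacc (PiNat.res x n) := fun n => by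
      rw [hres n]; exact hzmem n
    by_contra hne0
    have hpos : 0 < dist (F x) z := dist_pos.2 hne0
    obtain ⟨n, hn⟩ := hdiam.dist_lt _ hpos x
    exact absurd (hn _ (hFx n) _ (hzx n)) (lt_irrefl _)
  let e : (ℕ → Bool) ≃ Z := Equiv.ofBijective F ⟨hinj, hsurj⟩
  exact ⟨Continuous.homeoOfEquivCompactToT2 (f := e) hcont⟩

end Brouwer2

section HyperOpen
variable {α : Type*} [MetricSpace α]

theorem isOpen_subsets {U : Set α} (hU : IsOpen U) :
    IsOpen {C : NonemptyCompacts α | (C : Set α) ⊆ U} := by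
  rw [EMetric.isOpen_iff]
  rintro C (hC : (C : Set α) ⊆ U)
  obtain ⟨δ, δpos, hδ⟩ := C.isCompact.exists_thickening_subset_open hU hC
  refine ⟨ENNReal.ofReal δ, by simpa using δpos, fun D hD => ?_⟩
  intro y hy
  have hlt : EMetric.hausdorffEdist (D : Set α) (C : Set α) < ENNReal.ofReal δ := hD
  obtain ⟨x, hx, hxy⟩ := EMetric.exists_edist_lt_of_hausdorffEdist_lt hy hlt
  apply hδ
  rw [Metric.mem_thickening_iff]
  exact ⟨x, hx, by
    rwa [dist_edist, ← ENNReal.ofReal_lt_ofReal_iff δpos,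
      ENNReal.ofReal_toReal (hxy.trans_le le_top).ne]⟩

theorem isOpen_meets {U : Set α} (hU : IsOpen U) :
    IsOpen {C : NonemptyCompacts α | ((C : Set α) ∩ U).Nonempty} := by
  rw [EMetric.isOpen_iff]
  rintro C ⟨z, hzC, hzU⟩
  obtain ⟨δ, δpos, hδ⟩ := EMetric.mem_nhds_iff.1 (hU.mem_nhds hzU)
  refine ⟨δ, δpos, fun D hD => ?_⟩
  have hlt : EMetric.hausdorffEdist (C : Set α) (D : Set α) < δ := by
    rwa [EMetric.hausdorffEdist, Metric.hausdorffEDist_comm]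
  obtain ⟨y, hy, hxy⟩ := EMetric.exists_edist_lt_of_hausdorffEdist_lt hzC hlt
  exact ⟨y, hy, hδ (by rwa [EMetric.mem_ball, edist_comm])⟩

end HyperOpen

/-- every point of the Cantor space is an accumulation point of it -/
lemma cantor_acc : ∀ x : Cantor, AccPt x (Filter.principal Set.univ) := by
  intro x
  rw [accPt_iff_nhds]
  intro U hU
  have htend : Tendsto (fun n => Function.update x n (!x n)) atTop (𝓝 x) := by
    rw [tendsto_pi_nhds]
    intro m
    apply Tendsto.congr' (f₁ := fun _ => x m)
    · filter_upwards [eventually_gt_atTop m] with n hn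
      rw [Function.update_of_ne (by omega) _ x]
    · exact tendsto_const_nhds
  obtain ⟨n, hn⟩ := (htend.eventually_mem hU).exists
  refine ⟨Function.update x n (!x n), ⟨hn, mem_univ _⟩, ?_⟩
  intro h
  have := congrFun h n
  rw [Function.update_self] at this
  exact (Bool.not_ne_self (x n)) this

lemma closed_Cc : IsClosed Cc := by
  have : Cc = ⋂ x : Cantor,
      {C : NonemptyCompacts (Cantor × Cantor) |
        ((C : Set (Cantor × Cantor)) ∩ (Prod.fst ⁻¹' {x})).Nonempty} := by
    ext C
    simp only [Cc, mem_setOf_eq, mem_iInter]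
    constructor
    · intro h x
      have : x ∈ Prod.fst '' (C : Set (Cantor × Cantor)) := h ▸ mem_univ x
      obtain ⟨p, hp, hpx⟩ := this
      exact ⟨p, hp, by simpa using hpx⟩
    · intro h
      refine eq_univ_of_forall fun x => ?_
      obtain ⟨p, hp, hpx⟩ := h x
      exact ⟨p, hp, by simpa using hpx⟩
  rw [this]
  refine isClosed_iInter fun x => ?_
  have heq : {C : NonemptyCompacts (Cantor × Cantor) |
      ((C : Set (Cantor × Cantor)) ∩ (Prod.fst ⁻¹' {x})).Nonempty} =
      {C : NonemptyCompacts (Cantor × Cantor) |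
        (C : Set (Cantor × Cantor)) ⊆ (Prod.fst ⁻¹' {x})ᶜ}ᶜ := by
    ext C
    simp only [mem_setOf_eq, mem_compl_iff]
    rw [Set.subset_compl_iff_disjoint_right, Set.not_disjoint_iff_nonempty_inter]
  rw [heq]
  rw [isClosed_compl_iff]
  exact isOpen_subsets (isOpen_compl_iff.2 (isClosed_singleton.preimage continuous_fst))

def bigC : NonemptyCompacts (Cantor × Cantor) :=
  ⟨⟨Set.univ, isCompact_univ⟩, univ_nonempty⟩

lemma bigC_mem : bigC ∈ Cc := by
  show Prod.fst '' (Set.univ : Set (Cantor × Cantor)) = Set.univ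
  rw [Set.image_univ]
  exact Prod.fst_surjective.range_eq

lemma nonempty_Cc : Cc.Nonempty := ⟨bigC, bigC_mem⟩

example : TotallyDisconnectedSpace (Cantor × Cantor) := inferInstance
example : CompactSpace (Cantor × Cantor) := inferInstance
example : T2Space (Cantor × Cantor) := inferInstance
example : TotallyDisconnectedSpace Cantor := inferInstance
example : CompactSpace Cantor := inferInstance

lemma exists_box {W : Set (Cantor × Cantor)} (hW : IsOpen W) {p q : Cantor}
    (hpq : (p, q) ∈ W) :
    ∃ P Q : Set Cantor, IsClopen P ∧ IsClopen Q ∧ p ∈ P ∧ q ∈ Q ∧ P ×ˢ Q ⊆ W := by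
  obtain ⟨u, v, hu, hv, hpu, hqv, huv⟩ := isOpen_prod_iff.mp hW p q hpq
  obtain ⟨P, hP, hpP, hPu⟩ := compact_exists_isClopen_in_isOpen hu hpu
  obtain ⟨Q, hQ, hqQ, hQv⟩ := compact_exists_isClopen_in_isOpen hv hqv
  exact ⟨P, Q, hP, hQ, hpP, hqQ, (Set.prod_mono hPu hQv).trans huv⟩

lemma perfect_Cc : ∀ C ∈ Cc, ClusterPt C (Filter.principal (Cc \ {C})) := by
  intro C hC
  rw [clusterPt_principal_iff]
  intro U hU
  obtain ⟨ε, hε, hball⟩ := EMetric.mem_nhds_iff.mp hU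
  classical
  set δ : ℝ≥0∞ := min (ε / 2) 1 with hδdef
  have hδpos : 0 < δ := lt_min (ENNReal.half_pos hε.ne') zero_lt_one
  have hδε : δ < ε := by
    rcases eq_or_ne ε ⊤ with h | h
    · rw [h]
      exact (min_le_right _ _).trans_lt (by norm_num)
    · exact (min_le_left _ _).trans_lt (ENNReal.half_lt_self hε.ne' h)
  -- clopen cover of the square with small pieces
  have hchoice : ∀ y : Cantor × Cantor,
      ∃ V : Set (Cantor × Cantor), IsClopen V ∧ y ∈ V ∧ V ⊆ EMetric.ball y (δ / 2) :=
    fun y => compact_exists_isClopen_in_isOpen EMetric.isOpen_ball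
      (EMetric.mem_ball_self (ENNReal.half_pos hδpos.ne'))
  choose V hVcl hVmem hVsub using hchoice
  have hVdiam : ∀ y, EMetric.diam (V y) ≤ δ := fun y => by
    refine (EMetric.diam_mono (hVsub y)).trans ?_
    calc EMetric.diam (EMetric.ball y (δ / 2)) ≤ 2 * (δ / 2) := EMetric.diam_ball
    _ = δ := ENNReal.mul_div_cancel' (by norm_num) (by norm_num)
  obtain ⟨t, ht⟩ := isCompact_univ.elim_finite_subcover V (fun y => (hVcl y).2)
    (fun y _ => mem_iUnion.2 ⟨y, hVmem y⟩)
  set T : Finset (Cantor × Cantor) :=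
    t.filter (fun y => ((V y) ∩ (C : Set (Cantor × Cantor))).Nonempty) with hTdef
  set D0 : Set (Cantor × Cantor) := ⋃ y ∈ T, V y with hD0def
  have hC_sub : (C : Set (Cantor × Cantor)) ⊆ D0 := by
    intro c hc
    obtain ⟨y, hy, hcy⟩ := mem_iUnion₂.1 (ht (mem_univ c))
    exact mem_iUnion₂.2 ⟨y, Finset.mem_filter.2 ⟨hy, ⟨c, hcy, hc⟩⟩, hcy⟩
  have hD0cl : IsClopen D0 := isClopen_biUnion_finset (fun y _ => hVcl y)
  have hHD : EMetric.hausdorffEdist (C : Set (Cantor × Cantor)) D0 ≤ δ := by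
    refine EMetric.hausdorffEdist_le_of_mem_edist ?_ ?_
    · intro x hx
      exact ⟨x, hC_sub hx, by simp⟩
    · intro x hx
      obtain ⟨y, hy, hxy⟩ := mem_iUnion₂.1 hx
      obtain ⟨c, hcV, hcC⟩ := (Finset.mem_filter.1 hy).2
      exact ⟨c, hcC, (EMetric.edist_le_diam_of_mem hxy hcV).trans (hVdiam y)⟩
  by_cases hD0C : D0 = (C : Set (Cantor × Cantor))
  · -- C is clopen; carve out a small clopen box
    have hCcl : IsClopen (C : Set (Cantor × Cantor)) := hD0C ▸ hD0cl
    obtain ⟨⟨p, q⟩, hpq⟩ := C.nonempty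
    have hopen : IsOpen ((C : Set (Cantor × Cantor)) ∩ EMetric.ball (p, q) (δ / 2)) :=
      hCcl.2.inter EMetric.isOpen_ball
    obtain ⟨P, Q, hP, hQ, hpP, hqQ, hbox⟩ := exists_box hopen
      ⟨hpq, EMetric.mem_ball_self (ENNReal.half_pos hδpos.ne')⟩
    have hboxC : P ×ˢ Q ⊆ (C : Set (Cantor × Cantor)) :=
      hbox.trans inter_subset_left
    have hboxdiam : EMetric.diam (P ×ˢ Q) ≤ δ := by
      refine (EMetric.diam_mono (hbox.trans inter_subset_right)).trans ?_
      calc EMetric.diam (EMetric.ball ((p, q) : Cantor × Cantor) (δ / 2)) ≤ 2 * (δ / 2) :=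
        EMetric.diam_ball
      _ = δ := ENNReal.mul_div_cancel' (by norm_num) (by norm_num)
    obtain ⟨q'', ⟨hq''Q, -⟩, hq''ne⟩ :=
      accPt_iff_nhds.mp (cantor_acc q) Q (hQ.2.mem_nhds hqQ)
    obtain ⟨Q', hQ', hqQ', hQ'sub⟩ := compact_exists_isClopen_in_isOpen
      (hQ.2.inter isOpen_compl_singleton)
      (⟨hqQ, fun h => hq''ne (by simpa using h.symm)⟩ : q ∈ Q ∩ ({q''}ᶜ : Set Cantor))
    have hq''Q' : q'' ∉ Q' := fun h => (hQ'sub h).2 rfl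
    have hQ'Q : Q' ⊆ Q := fun y hy => (hQ'sub hy).1
    set E : Set (Cantor × Cantor) := (C : Set (Cantor × Cantor)) \ (P ×ˢ Q') with hEdef
    have hEclosed : IsClosed E := by
      rw [hEdef, Set.diff_eq]
      exact hCcl.1.inter (hP.prod hQ').2.isClosed_compl
    have hEmem : (p, q'') ∈ E :=
      ⟨hboxC ⟨hpP, hq''Q⟩, fun hb => hq''Q' hb.2⟩
    have hproj : Prod.fst '' E = Set.univ := by
      refine eq_univ_of_forall fun x => ?_
      by_cases hxP : x ∈ P
      · exact ⟨(x, q''), ⟨hboxC ⟨hxP, hq''Q⟩, fun hb => hq''Q' hb.2⟩, rfl⟩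
      · have : x ∈ Prod.fst '' (C : Set (Cantor × Cantor)) := hC ▸ mem_univ x
        obtain ⟨⟨x', y⟩, hxy, hx'⟩ := this
        cases hx'
        exact ⟨(x', y), ⟨hxy, fun hb => hxP hb.1⟩, rfl⟩
    have hHD' : EMetric.hausdorffEdist E (C : Set (Cantor × Cantor)) ≤ δ := by
      refine EMetric.hausdorffEdist_le_of_mem_edist ?_ ?_
      · intro x hx
        exact ⟨x, hx.1, by simp⟩
      · intro c hc
        by_cases hcb : c ∈ P ×ˢ Q'
        · refine ⟨(c.1, q''), ⟨hboxC ⟨hcb.1, hq''Q⟩, fun hb => hq''Q' hb.2⟩, ?_⟩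
          have hc1 : c ∈ P ×ˢ Q := ⟨hcb.1, hQ'Q hcb.2⟩
          have hc2 : ((c.1, q'') : Cantor × Cantor) ∈ P ×ˢ Q := ⟨hcb.1, hq''Q⟩
          exact (EMetric.edist_le_diam_of_mem hc1 hc2).trans hboxdiam
        · exact ⟨c, ⟨hc, hcb⟩, by simp⟩
    set D : NonemptyCompacts (Cantor × Cantor) :=
      ⟨⟨E, hEclosed.isCompact⟩, ⟨(p, q''), hEmem⟩⟩ with hDdef
    refine ⟨D, hball ?_, hproj, ?_⟩
    · show edist D C < ε
      exact lt_of_le_of_lt (le_trans (le_of_eq rfl) hHD') hδε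
    · intro hmem
      have hDC : (D : Set (Cantor × Cantor)) = (C : Set (Cantor × Cantor)) := by
        rw [mem_singleton_iff] at hmem
        rw [hmem]
      have h2 : (p, q) ∈ E := by
        show (p, q) ∈ (D : Set (Cantor × Cantor))
        rw [hDC]; exact hpq
      exact h2.2 ⟨hpP, hqQ'⟩
  · -- D0 is a new element of Cc close to C
    set D : NonemptyCompacts (Cantor × Cantor) :=
      ⟨⟨D0, hD0cl.1.isCompact⟩, C.nonempty.mono hC_sub⟩ with hDdef
    have hproj : Prod.fst '' D0 = Set.univ :=
      subset_antisymm (subset_univ _) (by rw [← hC]; exact Set.image_mono hC_sub)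
    refine ⟨D, hball ?_, hproj, ?_⟩
    · show edist D C < ε
      have : edist D C = EMetric.hausdorffEdist D0 (C : Set (Cantor × Cantor)) := rfl
      rw [this, EMetric.hausdorffEdist, Metric.hausdorffEDist_comm]
      exact lt_of_le_of_lt hHD hδε
    · intro hmem
      rw [mem_singleton_iff] at hmem
      refine hD0C ?_
      rw [← hmem]
      rfl

instance : TotallySeparatedSpace (NonemptyCompacts (Cantor × Cantor)) := by
  constructor
  intro C _ D _ hCD
  have hne : (C : Set (Cantor × Cantor)) ≠ (D : Set (Cantor × Cantor)) := by
    intro h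
    exact hCD (NonemptyCompacts.ext h)
  have key : ∀ C D : NonemptyCompacts (Cantor × Cantor), ∀ z,
      z ∈ (C : Set (Cantor × Cantor)) → z ∉ (D : Set (Cantor × Cantor)) →
      ∃ u v : Set (NonemptyCompacts (Cantor × Cantor)), IsOpen u ∧ IsOpen v ∧
        C ∈ u ∧ D ∈ v ∧ Set.univ ⊆ u ∪ v ∧ Disjoint u v := by
    intro C D z hzC hzD
    obtain ⟨W, hW, hzW, hWD⟩ := compact_exists_isClopen_in_isOpen
      (D.isCompact.isClosed.isOpen_compl) hzD
    refine ⟨{E | ((E : Set (Cantor × Cantor)) ∩ W).Nonempty},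
      {E | (E : Set (Cantor × Cantor)) ⊆ Wᶜ}, isOpen_meets hW.2,
      isOpen_subsets hW.1.isOpen_compl, ⟨z, hzC, hzW⟩, Set.subset_compl_comm.mp hWD, ?_, ?_⟩
    · intro E _
      by_cases h : ((E : Set (Cantor × Cantor)) ∩ W).Nonempty
      · exact Or.inl h
      · refine Or.inr fun y hy hyW => ?_
        exact h ⟨y, hy, hyW⟩
    · rw [Set.disjoint_left]
      rintro E ⟨y, hyE, hyW⟩ hEv
      exact (hEv hyE) hyW
  by_cases hsub : (C : Set (Cantor × Cantor)) ⊆ (D : Set (Cantor × Cantor))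
  · have hnsub : ¬ (D : Set (Cantor × Cantor)) ⊆ (C : Set (Cantor × Cantor)) := by
      intro h
      exact hne (subset_antisymm hsub h)
    obtain ⟨z, hz1, hz2⟩ := Set.not_subset.mp hnsub
    obtain ⟨u, v, hu, hv, hDu, hCv, hcov, hdisj⟩ := key D C z hz1 hz2
    exact ⟨v, u, hv, hu, hCv, hDu, fun E hE => (hcov hE).symm, hdisj.symm⟩
  · obtain ⟨z, hz1, hz2⟩ := Set.not_subset.mp hsub
    exact key C D z hz1 hz2

lemma acc_subCc : ∀ z : ↥Cc, AccPt z (Filter.principal (Set.univ : Set ↥Cc)) := by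
  intro z
  rw [accPt_iff_nhds]
  intro U hU
  obtain ⟨U', hU', hU'sub⟩ := mem_nhds_subtype Cc z U |>.mp hU
  obtain ⟨D, hDU', hDCc, hDne⟩ := clusterPt_principal_iff.mp (perfect_Cc z.1 z.2) U' hU'
  refine ⟨⟨D, hDCc⟩, ⟨hU'sub hDU', mem_univ _⟩, ?_⟩
  intro h
  apply hDne
  rw [mem_singleton_iff]
  exact congrArg Subtype.val h

/-- `𝒞 = {C ∈ K(2^ℕ × 2^ℕ) : π(C) = 2^ℕ}` is a closed subset of the
hyperspace, nonempty, without isolated points, hence homeomorphic to the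
Cantor set. -/
theorem stmt3 :
    IsClosed Cc ∧ Cc.Nonempty ∧
    (∀ C ∈ Cc, ClusterPt C (Filter.principal (Cc \ {C}))) ∧
    Nonempty (↥Cc ≃ₜ Cantor) := by
  refine ⟨closed_Cc, nonempty_Cc, perfect_Cc, ?_⟩
  haveI : CompactSpace ↥Cc := isCompact_iff_compactSpace.mp closed_Cc.isCompact
  haveI : Nonempty ↥Cc := ⟨⟨bigC, bigC_mem⟩⟩
  haveI : TotallyDisconnectedSpace (NonemptyCompacts (Cantor × Cantor)) :=
    TotallySeparatedSpace.totallyDisconnectedSpace _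
  haveI : TotallyDisconnectedSpace ↥Cc := Subtype.totallyDisconnectedSpace
  obtain ⟨e⟩ := brouwer_homeo acc_subCc
  exact ⟨e.symm⟩
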